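/- For positive reals x ≠ y, the shifted geometric mean G_{x,y}(t) = sqrt((x+t)(y+t)) is a Bernstein function of t on (-min{x,y}, ∞); that is, G_{x,y} is nonnegative and its derivative G_{x,y}'(t) = (x+y+2t)/(2 sqrt((x+t)(y+t))) is completely monotonic. -/

import Mathlib

open Polynomial

noncomputable def bQ (c2 : ℝ) : ℕ → Polynomial ℝ
  | 0 => 1
  | (k+1) => C (2*(k:ℝ)+3) * (bQ c2 k * X^1)
      - derivative (bQ c2 k) * X^2 + C c2 * derivative (bQ c2 k)

lemma bQ_coeff_eq (c2 : ℝ) (k j : ℕ) : (bQ c2 (k+1)).coeff j =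
    (2*(k:ℝ)+3) * (if 1 ≤ j then (bQ c2 k).coeff (j-1) else 0)
    - (if 2 ≤ j then (bQ c2 k).coeff (j-2+1) * (((j-2 : ℕ) : ℝ)+1) else 0)
    + c2 * ((bQ c2 k).coeff (j+1) * ((j:ℝ)+1)) := by
  show (C (2*(k:ℝ)+3) * (bQ c2 k * X^1) - derivative (bQ c2 k) * X^2
      + C c2 * derivative (bQ c2 k)).coeff j = _
  rw [Polynomial.coeff_add, Polynomial.coeff_sub, Polynomial.coeff_C_mul,
    Polynomial.coeff_C_mul, Polynomial.coeff_mul_X_pow', Polynomial.coeff_mul_X_pow',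
    Polynomial.coeff_derivative]
  simp only [Polynomial.coeff_derivative]

lemma bQ_coeff (c2 : ℝ) (hc : 0 ≤ c2) :
    ∀ k j, (0 ≤ (bQ c2 k).coeff j) ∧ (k < j → (bQ c2 k).coeff j = 0) := by
  intro k
  induction k with
  | zero =>
    intro j
    refine ⟨?_, fun hj => ?_⟩
    · simp only [bQ, Polynomial.coeff_one]
      split <;> norm_num
    · simp only [bQ, Polynomial.coeff_one]
      rw [if_neg (by omega)]
  | succ k ih =>
    intro j
    refine ⟨?_, fun hj => ?_⟩
    · rw [bQ_coeff_eq]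
      match j with
      | 0 =>
        norm_num
        exact mul_nonneg hc (ih 1).1
      | 1 =>
        norm_num
        have h1 : (0:ℝ) ≤ (2*(k:ℝ)+3) * (bQ c2 k).coeff 0 :=
          mul_nonneg (by positivity) (ih 0).1
        have h2 : (0:ℝ) ≤ c2 * ((bQ c2 k).coeff 2 * 2) :=
          mul_nonneg hc (mul_nonneg (ih 2).1 (by norm_num))
        linarith
      | (i+2) =>
        rw [if_pos (by omega), if_pos (by omega),
          show i+2-1 = i+1 from rfl, show i+2-2 = i from rfl]
        push_cast
        have ha := (ih (i+1)).1
        have hb := (ih (i+3)).1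
        have h2 : (0:ℝ) ≤ c2 * ((bQ c2 k).coeff (i+3) * ((i:ℝ)+2+1)) :=
          mul_nonneg hc (mul_nonneg hb (by positivity))
        rcases le_or_gt (i+1) k with h | h
        · have hik : ((i:ℝ)+1) ≤ 2*(k:ℝ)+3 := by
            have : ((i:ℝ)+1) ≤ (k:ℝ) := by exact_mod_cast h
            linarith
          have h1 : (0:ℝ) ≤ (2*(k:ℝ)+3 - ((i:ℝ)+1)) * (bQ c2 k).coeff (i+1) :=
            mul_nonneg (by linarith) ha
          nlinarith
        · have h0 : (bQ c2 k).coeff (i+1) = 0 := (ih (i+1)).2 h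
          rw [h0]
          simpa using h2
    · rw [bQ_coeff_eq]
      match j, hj with
      | (i+2), hj =>
        have h1 : (bQ c2 k).coeff (i+1) = 0 := (ih (i+1)).2 (by omega)
        have h3 : (bQ c2 k).coeff (i+3) = 0 := (ih (i+3)).2 (by omega)
        simp [show i+2-1 = i+1 from rfl, show i+2-2 = i from rfl, h1, h3]

lemma bQ_eval_nonneg (c2 : ℝ) (hc : 0 ≤ c2) (k : ℕ) {s : ℝ} (hs : 0 ≤ s) :
    0 ≤ (bQ c2 k).eval s := by
  rw [Polynomial.eval_eq_sum_range]
  apply Finset.sum_nonneg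
  intro i _
  exact mul_nonneg (bQ_coeff c2 hc k i).1 (pow_nonneg hs i)

/-- The shifted geometric mean `G_{x,y}(t) = sqrt((x+t)(y+t))` is a Bernstein function on
`(-min x y, ∞)`: it is nonnegative, its derivative is `(x+y+2t)/(2 sqrt((x+t)(y+t)))`, and
this derivative is completely monotonic. -/
theorem geometric_mean_two_bernstein (x y : ℝ) (hx : 0 < x) (hy : 0 < y) (hxy : x ≠ y) :
    (∀ t ∈ Set.Ioi (-(min x y)), 0 ≤ Real.sqrt ((x + t) * (y + t))) ∧
    (∀ t ∈ Set.Ioi (-(min x y)),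
      deriv (fun t : ℝ => Real.sqrt ((x + t) * (y + t))) t
        = (x + y + 2 * t) / (2 * Real.sqrt ((x + t) * (y + t)))) ∧
    (∀ n : ℕ, ∀ t ∈ Set.Ioi (-(min x y)),
      0 ≤ (-1 : ℝ) ^ n *
        iteratedDeriv n (deriv (fun t : ℝ => Real.sqrt ((x + t) * (y + t)))) t) := by
  have hposx : ∀ t ∈ Set.Ioi (-(min x y)), 0 < x + t := by
    intro t ht
    simp only [Set.mem_Ioi] at ht
    have := min_le_left x y
    linarith
  have hposy : ∀ t ∈ Set.Ioi (-(min x y)), 0 < y + t := by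
    intro t ht
    simp only [Set.mem_Ioi] at ht
    have := min_le_right x y
    linarith
  set c2 : ℝ := ((x - y)/2)^2 with hc2def
  have hc2' : (0:ℝ) ≤ c2 := sq_nonneg _
  have hspos : ∀ t ∈ Set.Ioi (-(min x y)), 0 < t + (x+y)/2 := by
    intro t ht
    simp only [Set.mem_Ioi] at ht
    rcases le_total x y with h | h
    · rw [min_eq_left h] at ht; linarith
    · rw [min_eq_right h] at ht; linarith
  have hG : ∀ t : ℝ, 0 < x + t → 0 < y + t →
      HasDerivAt (fun t : ℝ => Real.sqrt ((x + t) * (y + t)))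
        ((x + y + 2*t) / (2 * Real.sqrt ((x + t) * (y + t)))) t := by
    intro t h1 h2
    have hw : (0:ℝ) < (x + t) * (y + t) := mul_pos h1 h2
    have hinner : HasDerivAt (fun t : ℝ => (x + t) * (y + t)) (x + y + 2*t) t := by
      have := (((hasDerivAt_id t).const_add x).mul ((hasDerivAt_id t).const_add y))
      refine this.congr_deriv ?_
      simp only [id_eq]
      ring
    have h := (Real.hasDerivAt_sqrt hw.ne').comp t hinner
    refine h.congr_deriv ?_
    field_simp
  refine ⟨fun t _ => Real.sqrt_nonneg _, fun t ht => (hG t (hposx t ht) (hposy t ht)).deriv, ?_⟩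
  have hderiv : ∀ t ∈ Set.Ioi (-(min x y)),
      deriv (fun t : ℝ => Real.sqrt ((x + t) * (y + t))) t
        = (x + y + 2 * t) / (2 * Real.sqrt ((x + t) * (y + t))) :=
    fun t ht => (hG t (hposx t ht) (hposy t ht)).deriv
  have hEV : ∀ t ∈ Set.Ioi (-(min x y)),
      deriv (fun t : ℝ => Real.sqrt ((x + t) * (y + t))) =ᶠ[nhds t]
        (fun u : ℝ => (x + y + 2 * u) / (2 * Real.sqrt ((x + u) * (y + u)))) :=
    fun t ht => Filter.eventuallyEq_of_mem (isOpen_Ioi.mem_nhds ht) (fun u hu => hderiv u hu)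
  have key : ∀ k : ℕ, ∀ t ∈ Set.Ioi (-(min x y)),
      iteratedDeriv (k+1) (deriv (fun t : ℝ => Real.sqrt ((x + t) * (y + t)))) t
        = ((-1:ℝ)^(k+1) * c2) * (bQ c2 k).eval (t + (x+y)/2)
            / (Real.sqrt ((x + t) * (y + t)))^(2*k+3) := by
    intro k
    induction k with
    | zero =>
      intro t ht
      have h1 := hposx t ht
      have h2 := hposy t ht
      have hw : (0:ℝ) < (x + t) * (y + t) := mul_pos h1 h2
      have hr : (0:ℝ) < Real.sqrt ((x + t) * (y + t)) := Real.sqrt_pos.mpr hw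
      have hr2 : Real.sqrt ((x + t) * (y + t)) ^ 2 = (x + t) * (y + t) :=
        Real.sq_sqrt hw.le
      have hnum : HasDerivAt (fun u : ℝ => x + y + 2*u) 2 t := by
        have := ((hasDerivAt_id t).const_mul (2:ℝ)).const_add (x+y)
        refine this.congr_deriv ?_
        ring
      have hden : HasDerivAt (fun u : ℝ => 2 * Real.sqrt ((x + u) * (y + u)))
          (2 * ((x + y + 2*t) / (2 * Real.sqrt ((x + t) * (y + t))))) t :=
        (hG t h1 h2).const_mul 2
      have hdd := hnum.fun_div hden (by positivity)
      rw [iteratedDeriv_one, (hEV t ht).deriv_eq, hdd.deriv]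
      simp only [bQ, Polynomial.eval_one, mul_one]
      rw [div_eq_div_iff (by positivity) (by positivity)]
      have hc2eq : c2 = (t + (x+y)/2)^2 - Real.sqrt ((x + t) * (y + t)) ^ 2 := by
        rw [hr2, hc2def]; ring
      rw [hc2eq]
      field_simp
      ring
    | succ k ih =>
      intro t ht
      have h1 := hposx t ht
      have h2 := hposy t ht
      have hw : (0:ℝ) < (x + t) * (y + t) := mul_pos h1 h2
      have hr : (0:ℝ) < Real.sqrt ((x + t) * (y + t)) := Real.sqrt_pos.mpr hw
      have hr2 : Real.sqrt ((x + t) * (y + t)) ^ 2 = (x + t) * (y + t) :=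
        Real.sq_sqrt hw.le
      have hE : iteratedDeriv (k+1) (deriv (fun t : ℝ => Real.sqrt ((x + t) * (y + t))))
          =ᶠ[nhds t] (fun u : ℝ => ((-1:ℝ)^(k+1) * c2) * (bQ c2 k).eval (u + (x+y)/2)
            / (Real.sqrt ((x + u) * (y + u)))^(2*k+3)) :=
        Filter.eventuallyEq_of_mem (isOpen_Ioi.mem_nhds ht) (fun u hu => ih u hu)
      have hpoly : HasDerivAt (fun u : ℝ => (bQ c2 k).eval (u + (x+y)/2))
          ((Polynomial.derivative (bQ c2 k)).eval (t + (x+y)/2) * 1) t :=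
        ((bQ c2 k).hasDerivAt _).comp t ((hasDerivAt_id t).add_const _)
      have hnum : HasDerivAt
          (fun u : ℝ => ((-1:ℝ)^(k+1) * c2) * (bQ c2 k).eval (u + (x+y)/2))
          (((-1:ℝ)^(k+1) * c2) * ((Polynomial.derivative (bQ c2 k)).eval (t + (x+y)/2) * 1)) t :=
        hpoly.const_mul _
      have hden : HasDerivAt
          (fun u : ℝ => (Real.sqrt ((x + u) * (y + u)))^(2*k+3))
          ((↑(2*k+3) : ℝ) * (Real.sqrt ((x + t) * (y + t)))^(2*k+3-1)
            * ((x + y + 2*t) / (2 * Real.sqrt ((x + t) * (y + t))))) t :=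
        (hG t h1 h2).pow _
      have hdd := hnum.fun_div hden (by positivity)
      rw [iteratedDeriv_succ, hE.deriv_eq, hdd.deriv]
      simp only [bQ, Polynomial.eval_add, Polynomial.eval_sub, Polynomial.eval_mul,
        Polynomial.eval_pow, Polynomial.eval_C, Polynomial.eval_X, mul_one, pow_one]
      rw [div_eq_div_iff (by positivity) (by positivity)]
      have hc2eq : c2 = (t + (x+y)/2)^2 - Real.sqrt ((x + t) * (y + t)) ^ 2 := by
        rw [hr2, hc2def]; ring
      push_cast
      rw [hc2eq]
      field_simp
      ring
  intro n t ht
  have h1 := hposx t ht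
  have h2 := hposy t ht
  have hw : (0:ℝ) < (x + t) * (y + t) := mul_pos h1 h2
  have hr : (0:ℝ) < Real.sqrt ((x + t) * (y + t)) := Real.sqrt_pos.mpr hw
  match n with
  | 0 =>
    rw [iteratedDeriv_zero, pow_zero, one_mul, hderiv t ht]
    have := hspos t ht
    apply div_nonneg (by linarith) (by positivity)
  | (k+1) =>
    rw [key k t ht]
    have hone : ((-1:ℝ))^(k+1) * ((-1:ℝ))^(k+1) = 1 := by
      rw [← pow_add, ← two_mul, pow_mul]
      norm_num
    have heval : 0 ≤ (bQ c2 k).eval (t + (x+y)/2) :=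
      bQ_eval_nonneg c2 hc2' k (hspos t ht).le
    have : ((-1:ℝ))^(k+1) * (((-1:ℝ)^(k+1) * c2) * (bQ c2 k).eval (t + (x+y)/2)
        / (Real.sqrt ((x + t) * (y + t)))^(2*k+3))
        = c2 * (bQ c2 k).eval (t + (x+y)/2) / (Real.sqrt ((x + t) * (y + t)))^(2*k+3) := by
      rw [mul_div_assoc', ← mul_assoc, ← mul_assoc, hone, one_mul]
    rw [this]
    exact div_nonneg (mul_nonneg hc2' heval) (pow_nonneg hr.le _)
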